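/- For every index i with 1 ≤ i ≤ n, the component φ_i is not square-integrable at the origin: ∫_0^∞ φ_i(s)² ds = ∞ (even though ∫_ε^∞ φ_i(s)² ds < ∞ for every ε > 0). -/

import Mathlib

open MeasureTheory Filter Topology Matrix Set
open scoped RealInnerProductSpace

set_option maxHeartbeats 800000

namespace PhiAux

variable {n : ℕ} (f : ℝ → Fin n → ℝ)

noncomputable def Mg (t : ℝ) : Matrix (Fin n) (Fin n) ℝ :=
  Matrix.of fun j k => ∫ s in Set.Ioc 0 t, f s j * f s k

section basic

variable (hmeas : ∀ i, Measurable fun s => f s i)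
  (hloc : ∀ i, ∀ t > (0 : ℝ), IntegrableOn (fun s => (f s i) ^ 2) (Set.Ioc 0 t))

include hmeas hloc

theorem intOn (j k : Fin n) {x y : ℝ} (hx : 0 ≤ x) :
    IntegrableOn (fun s => f s j * f s k) (Set.Ioc x y) := by
  have hsub : Set.Ioc x y ⊆ Set.Ioc 0 (max y 1) := by
    intro s hs
    exact ⟨lt_of_le_of_lt hx hs.1, le_trans hs.2 (le_max_left _ _)⟩
  have hint : IntegrableOn (fun s => (f s j) ^ 2 + (f s k) ^ 2) (Set.Ioc 0 (max y 1)) :=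
    (hloc j _ (lt_of_lt_of_le one_pos (le_max_right _ _))).add
      (hloc k _ (lt_of_lt_of_le one_pos (le_max_right _ _)))
  have hb : IntegrableOn (fun s => f s j * f s k) (Set.Ioc 0 (max y 1)) := by
    refine Integrable.mono' hint ((hmeas j).mul (hmeas k)).aestronglyMeasurable ?_
    refine Eventually.of_forall fun s => ?_
    have : |f s j * f s k| ≤ (f s j) ^ 2 + (f s k) ^ 2 := by
      rw [abs_mul]
      nlinarith [sq_nonneg (|f s j| - |f s k|), abs_nonneg (f s j), abs_nonneg (f s k),
        sq_abs (f s j), sq_abs (f s k)]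
    simpa [Real.norm_eq_abs, abs_mul] using this
  exact hb.mono_set hsub

theorem Mg_sub (j k : Fin n) {x y : ℝ} (hx : 0 ≤ x) (hxy : x ≤ y) :
    Mg f y j k - Mg f x j k = ∫ s in Set.Ioc x y, f s j * f s k := by
  have hU : Set.Ioc 0 x ∪ Set.Ioc x y = Set.Ioc 0 y := Set.Ioc_union_Ioc_eq_Ioc hx hxy
  have := setIntegral_union (f := fun s => f s j * f s k) (μ := volume)
    (s := Set.Ioc 0 x) (t := Set.Ioc x y)
    (Set.Ioc_disjoint_Ioc_of_le le_rfl) measurableSet_Ioc (intOn f hmeas hloc j k le_rfl)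
    (intOn f hmeas hloc j k hx)
  rw [hU] at this
  simp only [Mg, Matrix.of_apply]
  rw [this]; ring

theorem swap_int (w v : Fin n → ℝ) {x y : ℝ} (hx : 0 ≤ x) (hxy : x ≤ y) :
    w ⬝ᵥ ((Mg f y - Mg f x).mulVec v) = ∫ s in Set.Ioc x y, (w ⬝ᵥ f s) * (v ⬝ᵥ f s) := by
  have hint : ∀ j k : Fin n, Integrable (fun s => w j * v k * (f s j * f s k))
      (volume.restrict (Set.Ioc x y)) := fun j k =>
    (intOn f hmeas hloc j k hx).const_mul _
  have : (fun s => (w ⬝ᵥ f s) * (v ⬝ᵥ f s))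
      = fun s => ∑ j, ∑ k, w j * v k * (f s j * f s k) := by
    funext s
    simp only [dotProduct, Finset.sum_mul_sum]
    refine Finset.sum_congr rfl fun j _ => Finset.sum_congr rfl fun k _ => by ring
  rw [this, integral_finset_sum _ (fun j _ => integrable_finset_sum _ fun k _ => hint j k)]
  simp only [dotProduct, Matrix.mulVec, Matrix.sub_apply, Finset.mul_sum]
  refine Finset.sum_congr rfl fun j _ => ?_
  rw [integral_finset_sum _ fun k _ => hint j k]
  refine Finset.sum_congr rfl fun k _ => ?_
  rw [MeasureTheory.integral_const_mul, ← Mg_sub f hmeas hloc j k hx hxy]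
  ring

omit hmeas hloc in
theorem Mg_zero : Mg f 0 = 0 := by
  ext j k; simp [Mg]

theorem quad_nonneg (v : Fin n → ℝ) {t : ℝ} (ht : 0 ≤ t) :
    0 ≤ v ⬝ᵥ ((Mg f t).mulVec v) := by
  have := swap_int f hmeas hloc v v (le_refl 0) ht
  rw [Mg_zero f, sub_zero] at this
  rw [this]
  refine setIntegral_nonneg measurableSet_Ioc fun s _ => ?_
  exact mul_self_nonneg _

end basic

noncomputable def Ai (t : ℝ) : Matrix (Fin n) (Fin n) ℝ := (Mg f t)⁻¹

theorem Mg_symm (t : ℝ) (j k : Fin n) : Mg f t j k = Mg f t k j := by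
  simp only [Mg, Matrix.of_apply]
  congr 1; funext s; ring

theorem Ai_symm {t : ℝ} (j k : Fin n) : Ai f t j k = Ai f t k j := by
  have h : (Mg f t)ᵀ = Mg f t := by
    ext a b; rw [Matrix.transpose_apply]; exact Mg_symm f t b a
  have := Matrix.transpose_nonsing_inv (Mg f t)
  rw [h] at this
  have := congrArg (fun B => B j k) this
  simpa [Matrix.transpose_apply, Ai] using this.symm

theorem triple_entry (P Q R : Matrix (Fin n) (Fin n) ℝ) (i : Fin n) :
    (P * Q * R) i i = (fun j => P i j) ⬝ᵥ (Q.mulVec fun k => R k i) := by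
  simp only [Matrix.mul_apply, Matrix.mulVec, dotProduct, Finset.sum_mul, Finset.mul_sum]
  rw [Finset.sum_comm]
  exact Finset.sum_congr rfl fun j _ => Finset.sum_congr rfl fun k _ => by ring

section inv

variable (hmeas : ∀ i, Measurable fun s => f s i)
  (hloc : ∀ i, ∀ t > (0 : ℝ), IntegrableOn (fun s => (f s i) ^ 2) (Set.Ioc 0 t))
  (hU : ∀ t > (0 : ℝ), IsUnit (Mg f t))

include hU

theorem hdet {t : ℝ} (ht : 0 < t) : IsUnit (Mg f t).det :=
  (Matrix.isUnit_iff_isUnit_det _).1 (hU t ht)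

theorem MAi {t : ℝ} (ht : 0 < t) : Mg f t * Ai f t = 1 :=
  Matrix.mul_nonsing_inv _ (hdet f hU ht)

theorem AiM {t : ℝ} (ht : 0 < t) : Ai f t * Mg f t = 1 :=
  Matrix.nonsing_inv_mul _ (hdet f hU ht)

theorem keyId {x y : ℝ} (hx : 0 < x) (hxy : x ≤ y) :
    Ai f x - Ai f y = Ai f x * (Mg f y - Mg f x) * Ai f y := by
  have hy : 0 < y := lt_of_lt_of_le hx hxy
  rw [Matrix.mul_sub, Matrix.sub_mul, Matrix.mul_assoc, MAi f hU hy, mul_one,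
    AiM f hU hx, one_mul]

include hmeas hloc

theorem key_scalar (i : Fin n) {x y : ℝ} (hx : 0 < x) (hxy : x ≤ y) :
    Ai f x i i - Ai f y i i
      = ∫ s in Set.Ioc x y,
          ((fun j => Ai f x i j) ⬝ᵥ f s) * ((fun j => Ai f y i j) ⬝ᵥ f s) := by
  have h1 : Ai f x i i - Ai f y i i
      = (fun j => Ai f x i j) ⬝ᵥ ((Mg f y - Mg f x).mulVec fun k => Ai f y k i) := by
    have := congrArg (fun B => B i i) (keyId f hU hx hxy)
    simp only [Matrix.sub_apply] at this
    rw [triple_entry] at this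
    exact this
  have hcol : (fun k => Ai f y k i) = fun j => Ai f y i j := funext fun k => Ai_symm f k i
  rw [hcol] at h1
  rw [h1, swap_int f hmeas hloc _ _ hx.le hxy]

omit hmeas hloc in
theorem Ai_diag_quad (i : Fin n) {t : ℝ} (ht : 0 < t) :
    Ai f t i i = (fun j => Ai f t i j) ⬝ᵥ ((Mg f t).mulVec fun k => Ai f t k i) := by
  have h0 : Ai f t * Mg f t * Ai f t = Ai f t := by
    rw [AiM f hU ht, one_mul]
  have h1 : (Ai f t * Mg f t * Ai f t) i i = Ai f t i i := by rw [h0]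
  rw [triple_entry] at h1
  exact h1.symm

theorem Ai_diag_nonneg (i : Fin n) {t : ℝ} (ht : 0 < t) : 0 ≤ Ai f t i i := by
  rw [Ai_diag_quad f hU i ht]
  have : (fun j => Ai f t i j) = fun k => Ai f t k i := funext fun k => Ai_symm f i k
  rw [this]
  exact quad_nonneg f hmeas hloc _ ht.le

omit hmeas hloc in
theorem sum_MAi (i : Fin n) {t : ℝ} (ht : 0 < t) :
    ∑ k, Mg f t i k * Ai f t k i = 1 := by
  have h1 : (Mg f t * Ai f t) i i = (1 : Matrix (Fin n) (Fin n) ℝ) i i := by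
    rw [MAi f hU ht]
  simpa [Matrix.mul_apply, Matrix.one_apply_eq] using h1

theorem Ai_diag_lower (i : Fin n) {t : ℝ} (ht : 0 < t) (c : ℝ) :
    2 * c - c ^ 2 * Mg f t i i ≤ Ai f t i i := by
  set v : Fin n → ℝ := fun j => Ai f t j i with hv
  set e : Fin n → ℝ := Pi.single i c with he
  have hq := quad_nonneg f hmeas hloc (v - e) ht.le
  have hMv : ∀ j, (Mg f t).mulVec v j = if j = i then 1 else
      ∑ k, Mg f t j k * Ai f t k i := by
    intro j
    simp only [Matrix.mulVec, dotProduct, hv]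
    split
    · next hji => rw [hji]; exact sum_MAi f hU i ht
    · rfl
  have hvMv : v ⬝ᵥ ((Mg f t).mulVec v) = Ai f t i i := by
    have := Ai_diag_quad f hU i ht
    have hrow : (fun j => Ai f t i j) = v := funext fun k => Ai_symm f i k
    rw [hrow] at this
    exact this.symm
  have hvMe : v ⬝ᵥ ((Mg f t).mulVec e) = c := by
    rw [he, Matrix.mulVec_single]
    simp only [dotProduct, hv]
    simp only [Pi.smul_apply, Matrix.col_apply, op_smul_eq_mul]
    have : ∀ k, Ai f t k i * (Mg f t k i * c) = (Mg f t i k * Ai f t k i) * c := by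
      intro k; rw [Mg_symm f t k i]; ring
    rw [Finset.sum_congr rfl fun k _ => this k, ← Finset.sum_mul, sum_MAi f hU i ht, one_mul]
  have heMv : e ⬝ᵥ ((Mg f t).mulVec v) = c := by
    rw [he, single_dotProduct, hMv i, if_pos rfl, mul_one]
  have heMe : e ⬝ᵥ ((Mg f t).mulVec e) = c * (Mg f t i i * c) := by
    rw [he, Matrix.mulVec_single, single_dotProduct, Pi.smul_apply, Matrix.col_apply, op_smul_eq_mul]
  rw [Matrix.mulVec_sub, sub_dotProduct, dotProduct_sub, dotProduct_sub,
    hvMv, hvMe, heMv, heMe] at hq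
  nlinarith [hq]

end inv

theorem abs_indicator_le (A : Set ℝ) (g : ℝ → ℝ) (s : ℝ) :
    |Set.indicator A g s| ≤ |g s| := by
  by_cases h : s ∈ A
  · rw [Set.indicator_of_mem h]
  · rw [Set.indicator_of_notMem h, abs_zero]; exact abs_nonneg _

section cont

variable (hmeas : ∀ i, Measurable fun s => f s i)
  (hloc : ∀ i, ∀ t > (0 : ℝ), IntegrableOn (fun s => (f s i) ^ 2) (Set.Ioc 0 t))
  (hU : ∀ t > (0 : ℝ), IsUnit (Mg f t))

include hmeas hloc

theorem Mg_entry_continuousAt (j k : Fin n) {t0 : ℝ} (ht0 : 0 < t0) :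
    ContinuousAt (fun t => Mg f t j k) t0 := by
  have hInt : IntegrableOn (fun s => f s j * f s k) (Set.Icc 0 (t0 + 1)) := by
    rw [integrableOn_Icc_iff_integrableOn_Ioc]
    exact intOn f hmeas hloc j k le_rfl
  have hcont := intervalIntegral.continuousOn_primitive (f := fun s => f s j * f s k)
      (μ := volume) (a := 0) (b := t0 + 1) hInt
  have hmem : Set.Icc (0:ℝ) (t0 + 1) ∈ 𝓝 t0 := Icc_mem_nhds ht0 (by linarith)
  exact (hcont.continuousAt hmem :)

theorem Mg_continuousAt {t0 : ℝ} (ht0 : 0 < t0) :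
    ContinuousAt (fun t => Mg f t) t0 := by
  refine continuousAt_pi.2 fun j => continuousAt_pi.2 fun k => ?_
  exact Mg_entry_continuousAt f hmeas hloc j k ht0

include hU

theorem Ai_continuousAt {t0 : ℝ} (ht0 : 0 < t0) :
    ContinuousAt (fun t => Ai f t) t0 := by
  have h1 : ContinuousAt Inv.inv (Mg f t0) := by
    refine continuousAt_matrix_inv _ ?_
    exact NormedRing.inverse_continuousAt (hdet f hU ht0).unit
  exact h1.comp (Mg_continuousAt f hmeas hloc ht0)

theorem Mg_diag_small (i : Fin n) {δ : ℝ} (hδ : 0 < δ) :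
    ∃ t : ℝ, 0 < t ∧ t ≤ 1 ∧ Mg f t i i < δ := by
  have hseq : Tendsto (fun m : ℕ => Mg f (1 / (m + 1)) i i) atTop (𝓝 0) := by
    have h0 : ∀ m : ℕ, Mg f (1 / (m + 1 : ℝ)) i i
        = ∫ s in Set.Ioc (0:ℝ) 1, Set.indicator (Set.Ioc (0:ℝ) (1 / (m + 1))) (fun s => f s i * f s i) s := by
      intro m
      rw [integral_indicator measurableSet_Ioc, Measure.restrict_restrict measurableSet_Ioc]
      have : Set.Ioc (0:ℝ) (1 / (m + 1)) ∩ Set.Ioc 0 1 = Set.Ioc (0:ℝ) (1 / (m + 1)) := by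
        refine Set.inter_eq_self_of_subset_left (Set.Ioc_subset_Ioc_right ?_)
        rw [div_le_one (by positivity)]
        nlinarith [Nat.cast_nonneg (α := ℝ) m]
      rw [this]; rfl
    simp only [h0]
    have hbound : IntegrableOn (fun s => f s i * f s i) (Set.Ioc (0:ℝ) 1) :=
      intOn f hmeas hloc i i le_rfl
    have := MeasureTheory.tendsto_integral_of_dominated_convergence
      (F := fun m : ℕ => Set.indicator (Set.Ioc (0:ℝ) (1 / (m + 1))) fun s => f s i * f s i)
      (f := fun _ : ℝ => (0:ℝ)) (μ := volume.restrict (Set.Ioc (0:ℝ) 1))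
      (bound := fun s => |f s i * f s i|)
      (fun m => (((hmeas i).mul (hmeas i)).indicator measurableSet_Ioc).aestronglyMeasurable)
      hbound.abs
      (fun m => Eventually.of_forall fun s => ?_)
      ((ae_restrict_iff' measurableSet_Ioc).2 (Eventually.of_forall fun s hs => ?_))
    · simpa using this
    · simp only [Real.norm_eq_abs]
      exact abs_indicator_le _ _ _
    · have hspos : (0:ℝ) < s := hs.1
      obtain ⟨m0, hm0⟩ := exists_nat_gt (1 / s)
      refine Tendsto.congr' ?_ (tendsto_const_nhds (x := (0:ℝ)))
      filter_upwards [eventually_ge_atTop m0] with m hm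
      have h2 : 1 / s < (m : ℝ) + 1 := by
        refine lt_of_lt_of_le hm0 ?_
        have : (m0 : ℝ) ≤ m := Nat.cast_le.2 hm
        linarith
      refine (Set.indicator_of_notMem ?_ _).symm
      intro hmem
      have hle : s ≤ 1 / ((m:ℝ) + 1) := hmem.2
      have hs1 : s * ((m:ℝ) + 1) ≤ 1 := by
        rw [le_div_iff₀ (by positivity)] at hle; linarith
      have hs2 : 1 < s * ((m:ℝ) + 1) := by
        rw [div_lt_iff₀ hspos] at h2; linarith
      linarith
  rw [Metric.tendsto_atTop] at hseq
  obtain ⟨m, hm⟩ := hseq δ hδ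
  have hm' := hm m le_rfl
  rw [Real.dist_eq, sub_zero] at hm'
  refine ⟨1 / (m + 1), by positivity, ?_, lt_of_le_of_lt (le_abs_self _) hm'⟩
  rw [div_le_one (by positivity)]
  nlinarith [Nat.cast_nonneg (α := ℝ) m]

end cont

section main

open scoped RealInnerProductSpace

noncomputable def Uvec (i : Fin n) (t : ℝ) : EuclideanSpace ℝ (Fin n) :=
  (WithLp.equiv 2 (Fin n → ℝ)).symm (fun j => Ai f t i j)

noncomputable def Fvec (s : ℝ) : EuclideanSpace ℝ (Fin n) :=
  (WithLp.equiv 2 (Fin n → ℝ)).symm (f s)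

theorem inner_UF (i : Fin n) (t s : ℝ) :
    ⟪Uvec f i t, Fvec f s⟫ = (fun j => Ai f t i j) ⬝ᵥ f s := by
  simp [Uvec, Fvec, PiLp.inner_apply, RCLike.inner_apply, dotProduct]
  exact Finset.sum_congr rfl fun _ _ => mul_comm _ _

theorem phi_eq (i : Fin n) (s : ℝ) :
    ((Mg f s)⁻¹).mulVec (f s) i = ⟪Uvec f i s, Fvec f s⟫ := by
  rw [inner_UF]
  simp [Matrix.mulVec, dotProduct, Ai]

theorem norm_Fvec_sq (s : ℝ) : ‖Fvec f s‖ ^ 2 = ∑ j, (f s j) ^ 2 := by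
  rw [← real_inner_self_eq_norm_sq]
  rw [PiLp.inner_apply]
  simp [Fvec, PiLp.inner_apply, RCLike.inner_apply, sq]

theorem Fvec_measurable (hmeas : ∀ i, Measurable fun s => f s i) :
    Measurable (Fvec f) := by
  refine (PiLp.continuous_toLp 2 (fun _ : Fin n => ℝ)).measurable.comp ?_
  exact measurable_pi_lambda _ hmeas

section hyp

variable (hmeas : ∀ i, Measurable fun s => f s i)
  (hloc : ∀ i, ∀ t > (0 : ℝ), IntegrableOn (fun s => (f s i) ^ 2) (Set.Ioc 0 t))
  (hU : ∀ t > (0 : ℝ), IsUnit (Mg f t))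

include hmeas hloc hU

theorem Uvec_continuousAt (i : Fin n) {t0 : ℝ} (ht0 : 0 < t0) :
    ContinuousAt (Uvec f i) t0 := by
  refine (PiLp.continuous_toLp 2 (fun _ : Fin n => ℝ)).continuousAt.comp ?_
  refine continuousAt_pi.2 fun j => ?_
  have h1 : ContinuousAt (fun t => Ai f t) t0 := Ai_continuousAt f hmeas hloc hU ht0
  exact (((continuous_apply j).comp (continuous_apply i)).continuousAt).comp h1

theorem Gf_integrableOn {x y : ℝ} (hx : 0 ≤ x) :
    IntegrableOn (fun s => ‖Fvec f s‖ ^ 2) (Set.Ioc x y) := by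
  have : (fun s => ‖Fvec f s‖ ^ 2) = fun s => ∑ j, (f s j) ^ 2 := by
    funext s; exact norm_Fvec_sq f s
  rw [this]
  refine integrable_finset_sum _ fun j _ => ?_
  have hsub : Set.Ioc x y ⊆ Set.Ioc 0 (max y 1) := fun s hs =>
    ⟨lt_of_le_of_lt hx hs.1, le_trans hs.2 (le_max_left _ _)⟩
  exact (hloc j _ (lt_of_lt_of_le one_pos (le_max_right _ _))).mono_set hsub

theorem phif_aesm (i : Fin n) {x y : ℝ} (hx : 0 < x) :
    AEStronglyMeasurable (fun s => ⟪Uvec f i s, Fvec f s⟫)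
      (volume.restrict (Set.Ioc x y)) := by
  have hUc : ContinuousOn (Uvec f i) (Set.Ioc x y) := fun t ht =>
    (Uvec_continuousAt f hmeas hloc hU i (lt_trans hx ht.1)).continuousWithinAt
  have hUm : AEMeasurable (Uvec f i) (volume.restrict (Set.Ioc x y)) :=
    hUc.aemeasurable measurableSet_Ioc
  have hFm : AEMeasurable (Fvec f) (volume.restrict (Set.Ioc x y)) :=
    (Fvec_measurable f hmeas).aemeasurable
  exact (hUm.inner hFm).aestronglyMeasurable

theorem phif_sq_integrableOn (i : Fin n) {x y : ℝ} (hx : 0 < x) :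
    IntegrableOn (fun s => ⟪Uvec f i s, Fvec f s⟫ ^ 2) (Set.Ioc x y) := by
  rcases le_or_gt y x with h | h
  · rw [Set.Ioc_eq_empty (not_lt.2 h)]
    simp [IntegrableOn]
  have hUc : ContinuousOn (Uvec f i) (Set.Icc x y) := fun t ht =>
    (Uvec_continuousAt f hmeas hloc hU i (lt_of_lt_of_le hx ht.1)).continuousWithinAt
  obtain ⟨K, hK⟩ := isCompact_Icc.exists_bound_of_continuousOn hUc
  have haesm : AEStronglyMeasurable (fun s => ⟪Uvec f i s, Fvec f s⟫ ^ 2)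
      (volume.restrict (Set.Ioc x y)) := (phif_aesm f hmeas hloc hU i hx).pow 2
  refine Integrable.mono' ((Gf_integrableOn f hmeas hloc hU hx.le).const_mul (K ^ 2))
    haesm ?_
  filter_upwards [ae_restrict_mem measurableSet_Ioc] with s hs
  have hKs : ‖Uvec f i s‖ ≤ K := hK s ⟨hs.1.le, hs.2⟩
  have h1 : |⟪Uvec f i s, Fvec f s⟫| ≤ K * ‖Fvec f s‖ :=
    le_trans (abs_real_inner_le_norm _ _) (by
      have := norm_nonneg (Fvec f s); nlinarith [norm_nonneg (Uvec f i s)])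
  rw [Real.norm_eq_abs, abs_pow]
  nlinarith [abs_nonneg (⟪Uvec f i s, Fvec f s⟫), norm_nonneg (Fvec f s), h1]

end hyp

theorem inner_prod_diff_bound {E : Type*} [NormedAddCommGroup E] [InnerProductSpace ℝ E]
    (ua ub us F : E) (K η : ℝ) (hη : 0 ≤ η) (hK : 0 ≤ K)
    (hb : ‖ub‖ ≤ K) (hc : ‖us‖ ≤ K) (hda : ‖ua - us‖ ≤ η) (hdb : ‖ub - us‖ ≤ η) :
    |⟪ua, F⟫ * ⟪ub, F⟫ - ⟪us, F⟫ ^ 2| ≤ 2 * K * η * ‖F‖ ^ 2 := by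
  have hA : |⟪ua - us, F⟫| ≤ η * ‖F‖ :=
    le_trans (abs_real_inner_le_norm _ _)
      (mul_le_mul_of_nonneg_right hda (norm_nonneg _))
  have hB : |⟪ub, F⟫| ≤ K * ‖F‖ :=
    le_trans (abs_real_inner_le_norm _ _)
      (mul_le_mul_of_nonneg_right hb (norm_nonneg _))
  have hC : |⟪us, F⟫| ≤ K * ‖F‖ :=
    le_trans (abs_real_inner_le_norm _ _)
      (mul_le_mul_of_nonneg_right hc (norm_nonneg _))
  have hD : |⟪ub - us, F⟫| ≤ η * ‖F‖ :=
    le_trans (abs_real_inner_le_norm _ _)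
      (mul_le_mul_of_nonneg_right hdb (norm_nonneg _))
  have expand : ⟪ua, F⟫ * ⟪ub, F⟫ - ⟪us, F⟫ ^ 2
      = ⟪ua - us, F⟫ * ⟪ub, F⟫ + ⟪us, F⟫ * ⟪ub - us, F⟫ := by
    rw [inner_sub_left, inner_sub_left]; ring
  rw [expand]
  refine le_trans (abs_add_le _ _) ?_
  rw [abs_mul, abs_mul]
  nlinarith [hA, hB, hC, hD, abs_nonneg (⟪ua - us, F⟫), abs_nonneg (⟪ub - us, F⟫),
    abs_nonneg (⟪us, F⟫), abs_nonneg (⟪ub, F⟫), norm_nonneg F]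

section hyp2

variable (hmeas : ∀ i, Measurable fun s => f s i)
  (hloc : ∀ i, ∀ t > (0 : ℝ), IntegrableOn (fun s => (f s i) ^ 2) (Set.Ioc 0 t))
  (hU : ∀ t > (0 : ℝ), IsUnit (Mg f t))

include hmeas hloc hU

theorem key_inner (i : Fin n) {a b : ℝ} (ha : 0 < a) (hab : a ≤ b) :
    Ai f a i i - Ai f b i i
      = ∫ s in Set.Ioc a b, ⟪Uvec f i a, Fvec f s⟫ * ⟪Uvec f i b, Fvec f s⟫ := by
  rw [key_scalar f hmeas hloc hU i ha hab]
  refine setIntegral_congr_fun measurableSet_Ioc fun s _ => ?_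
  rw [inner_UF, inner_UF]

theorem prod_integrableOn (i : Fin n) (t1 t2 : ℝ) {a b : ℝ} (ha : 0 ≤ a) :
    IntegrableOn (fun s => ⟪Uvec f i t1, Fvec f s⟫ * ⟪Uvec f i t2, Fvec f s⟫)
      (Set.Ioc a b) := by
  refine Integrable.mono'
    ((Gf_integrableOn f hmeas hloc hU ha).const_mul (‖Uvec f i t1‖ * ‖Uvec f i t2‖)) ?_ ?_
  · refine ((Measurable.inner measurable_const (Fvec_measurable f hmeas)).mul
      (Measurable.inner measurable_const (Fvec_measurable f hmeas))).aestronglyMeasurable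
  · refine Eventually.of_forall fun s => ?_
    rw [Real.norm_eq_abs, abs_mul]
    have h1 := abs_real_inner_le_norm (Uvec f i t1) (Fvec f s)
    have h2 := abs_real_inner_le_norm (Uvec f i t2) (Fvec f s)
    nlinarith [abs_nonneg (⟪Uvec f i t1, Fvec f s⟫), abs_nonneg (⟪Uvec f i t2, Fvec f s⟫),
      norm_nonneg (Fvec f s), norm_nonneg (Uvec f i t1), norm_nonneg (Uvec f i t2)]

theorem main_eq (i : Fin n) {x y : ℝ} (hx : 0 < x) (hxy : x ≤ y) :
    ∫ s in Set.Ioc x y, ⟪Uvec f i s, Fvec f s⟫ ^ 2 = Ai f x i i - Ai f y i i := by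
  -- continuity and bounds on Icc x y
  have hUc : ContinuousOn (Uvec f i) (Set.Icc x y) := fun t ht =>
    (Uvec_continuousAt f hmeas hloc hU i (lt_of_lt_of_le hx ht.1)).continuousWithinAt
  obtain ⟨K0, hK0⟩ := isCompact_Icc.exists_bound_of_continuousOn hUc
  set K : ℝ := max K0 1 with hKdef
  have hKpos : 0 < K := lt_of_lt_of_le one_pos (le_max_right _ _)
  have hK : ∀ t ∈ Set.Icc x y, ‖Uvec f i t‖ ≤ K := fun t ht =>
    le_trans (hK0 t ht) (le_max_left _ _)
  have hGint : IntegrableOn (fun s => ‖Fvec f s‖ ^ 2) (Set.Ioc x y) :=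
    Gf_integrableOn f hmeas hloc hU hx.le
  have hGnonneg : ∀ s, 0 ≤ ‖Fvec f s‖ ^ 2 := fun s => sq_nonneg _
  have hIG : 0 ≤ ∫ s in Set.Ioc x y, ‖Fvec f s‖ ^ 2 :=
    setIntegral_nonneg measurableSet_Ioc fun s _ => hGnonneg s
  set CG : ℝ := (∫ s in Set.Ioc x y, ‖Fvec f s‖ ^ 2) + 1 with hCGdef
  have hCGpos : 0 < CG := by positivity
  -- it suffices to bound the difference by every positive η
  have habs : ∀ η : ℝ, 0 < η →
      |(∫ s in Set.Ioc x y, ⟪Uvec f i s, Fvec f s⟫ ^ 2) - (Ai f x i i - Ai f y i i)| ≤ η := by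
    intro η hη
    set η0 : ℝ := η / (2 * K * CG) with hη0def
    have hη0pos : 0 < η0 := by positivity
    -- uniform continuity
    have huc := isCompact_Icc.uniformContinuousOn_of_continuous hUc
    rw [Metric.uniformContinuousOn_iff] at huc
    obtain ⟨δ, hδpos, hδ⟩ := huc η0 hη0pos
    obtain ⟨N, hN⟩ := exists_nat_gt ((y - x) / δ)
    have hNpos : 0 < (N : ℝ) :=
      lt_of_le_of_lt (div_nonneg (by linarith) hδpos.le) hN
    set step : ℝ := (y - x) / N with hstepdef
    have hstep0 : 0 ≤ step := div_nonneg (by linarith) hNpos.le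
    have hstepδ : step < δ := by
      rw [hstepdef, div_lt_iff₀ hNpos]
      rw [div_lt_iff₀ hδpos] at hN
      nlinarith
    set p : ℕ → ℝ := fun k => x + k * step with hpdef
    have hp0 : p 0 = x := by simp [hpdef]
    have hpN : p N = y := by
      simp only [hpdef, hstepdef]
      field_simp
      ring
    have hpmono : ∀ k : ℕ, p k ≤ p (k + 1) := by
      intro k
      simp only [hpdef]
      push_cast
      nlinarith
    have hprange : ∀ k : ℕ, k ≤ N → p k ∈ Set.Icc x y := by
      intro k hk
      constructor
      · simp only [hpdef]
        nlinarith [hstep0, Nat.cast_nonneg (α := ℝ) k]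
      · have : p k ≤ p N := by
          simp only [hpdef]
          have : (k : ℝ) ≤ N := Nat.cast_le.2 hk
          nlinarith
        rw [hpN] at this; exact this
    have hppos : ∀ k : ℕ, 0 < p k := by
      intro k; simp only [hpdef]; positivity
    -- step bound
    have hstepbd : ∀ k : ℕ, k + 1 ≤ N →
        |(Ai f (p k) i i - Ai f (p (k + 1)) i i)
            - ∫ s in Set.Ioc (p k) (p (k + 1)), ⟪Uvec f i s, Fvec f s⟫ ^ 2|
          ≤ 2 * K * η0 * ∫ s in Set.Ioc (p k) (p (k + 1)), ‖Fvec f s‖ ^ 2 := by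
      intro k hk1
      have hk : k ≤ N := le_trans (Nat.le_succ k) hk1
      have ha := hprange k hk
      have hb := hprange (k + 1) hk1
      rw [key_inner f hmeas hloc hU i (hppos k) (hpmono k)]
      have hint1 := prod_integrableOn f hmeas hloc hU i (p k) (p (k + 1))
        (a := p k) (b := p (k + 1)) (hppos k).le
      have hint2 : IntegrableOn (fun s => ⟪Uvec f i s, Fvec f s⟫ ^ 2)
          (Set.Ioc (p k) (p (k + 1))) := phif_sq_integrableOn f hmeas hloc hU i (hppos k)
      rw [← integral_sub hint1 hint2]
      refine le_trans (by
        simpa [Real.norm_eq_abs] using MeasureTheory.norm_integral_le_integral_norm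
          (μ := volume.restrict (Set.Ioc (p k) (p (k + 1))))
          (f := fun s => ⟪Uvec f i (p k), Fvec f s⟫ * ⟪Uvec f i (p (k + 1)), Fvec f s⟫
            - ⟪Uvec f i s, Fvec f s⟫ ^ 2)) ?_
      rw [← MeasureTheory.integral_const_mul]
      refine setIntegral_mono_on ((hint1.sub hint2).abs)
        (((Gf_integrableOn f hmeas hloc hU (hppos k).le)).const_mul _)
        measurableSet_Ioc fun s hs => ?_
      have hsmem : s ∈ Set.Icc x y := ⟨le_trans ha.1 hs.1.le, le_trans hs.2 hb.2⟩
      have hdista : dist (p k) s < δ := by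
        rw [Real.dist_eq, abs_sub_comm, abs_of_nonneg (by linarith [hs.1.le])]
        have : s ≤ p (k + 1) := hs.2
        have hd : p (k + 1) - p k = step := by simp only [hpdef]; push_cast; ring
        linarith [hs.1, hstepδ]
      have hdistb : dist (p (k + 1)) s < δ := by
        rw [Real.dist_eq, abs_of_nonneg (by linarith [hs.2])]
        have hd : p (k + 1) - p k = step := by simp only [hpdef]; push_cast; ring
        linarith [hs.1, hstepδ]
      have hna : ‖Uvec f i (p k) - Uvec f i s‖ ≤ η0 := by
        have := hδ (p k) ha s hsmem hdista
        rw [dist_eq_norm] at this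
        exact this.le
      have hnb : ‖Uvec f i (p (k + 1)) - Uvec f i s‖ ≤ η0 := by
        have := hδ (p (k + 1)) hb s hsmem hdistb
        rw [dist_eq_norm] at this
        exact this.le
      exact inner_prod_diff_bound _ _ _ _ K η0 hη0pos.le hKpos.le
        (hK _ hb) (hK _ hsmem) hna hnb
    -- induction
    have hind : ∀ k : ℕ, k ≤ N →
        |(Ai f x i i - Ai f (p k) i i)
            - ∫ s in Set.Ioc x (p k), ⟪Uvec f i s, Fvec f s⟫ ^ 2|
          ≤ 2 * K * η0 * ∫ s in Set.Ioc x (p k), ‖Fvec f s‖ ^ 2 := by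
      intro k
      induction k with
      | zero =>
        intro _
        rw [hp0]
        simp
      | succ k ih =>
        intro hk1
        have hk : k ≤ N := le_trans (Nat.le_succ k) hk1
        have ih' := ih hk
        have hstep := hstepbd k hk1
        have hxpk : x ≤ p k := (hprange k hk).1
        have hunion : Set.Ioc x (p k) ∪ Set.Ioc (p k) (p (k + 1)) = Set.Ioc x (p (k + 1)) :=
          Set.Ioc_union_Ioc_eq_Ioc hxpk (hpmono k)
        have hsplit : ∀ g : ℝ → ℝ, IntegrableOn g (Set.Ioc x (p k)) →
            IntegrableOn g (Set.Ioc (p k) (p (k + 1))) →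
            (∫ s in Set.Ioc x (p (k + 1)), g s)
              = (∫ s in Set.Ioc x (p k), g s) + ∫ s in Set.Ioc (p k) (p (k + 1)), g s := by
          intro g hg1 hg2
          rw [← hunion]
          exact setIntegral_union (Set.Ioc_disjoint_Ioc_of_le le_rfl) measurableSet_Ioc hg1 hg2
        rw [hsplit _ (phif_sq_integrableOn f hmeas hloc hU i hx)
            (phif_sq_integrableOn f hmeas hloc hU i (hppos k)),
          hsplit _ (Gf_integrableOn f hmeas hloc hU hx.le)
            (Gf_integrableOn f hmeas hloc hU (hppos k).le)]
        have htri : |(Ai f x i i - Ai f (p (k + 1)) i i)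
            - ((∫ s in Set.Ioc x (p k), ⟪Uvec f i s, Fvec f s⟫ ^ 2)
              + ∫ s in Set.Ioc (p k) (p (k + 1)), ⟪Uvec f i s, Fvec f s⟫ ^ 2)|
            ≤ |(Ai f x i i - Ai f (p k) i i)
                - ∫ s in Set.Ioc x (p k), ⟪Uvec f i s, Fvec f s⟫ ^ 2|
              + |(Ai f (p k) i i - Ai f (p (k + 1)) i i)
                - ∫ s in Set.Ioc (p k) (p (k + 1)), ⟪Uvec f i s, Fvec f s⟫ ^ 2| := by
          have := abs_add_le ((Ai f x i i - Ai f (p k) i i)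
              - ∫ s in Set.Ioc x (p k), ⟪Uvec f i s, Fvec f s⟫ ^ 2)
            ((Ai f (p k) i i - Ai f (p (k + 1)) i i)
              - ∫ s in Set.Ioc (p k) (p (k + 1)), ⟪Uvec f i s, Fvec f s⟫ ^ 2)
          refine le_trans (le_of_eq ?_) this
          congr 1
          ring
        refine le_trans htri ?_
        rw [mul_add]
        exact add_le_add ih' hstep
    have hfinal := hind N le_rfl
    rw [hpN] at hfinal
    have hGle : (∫ s in Set.Ioc x y, ‖Fvec f s‖ ^ 2) ≤ CG := by
      rw [hCGdef]; linarith
    have h2K : 2 * K * η0 * (∫ s in Set.Ioc x y, ‖Fvec f s‖ ^ 2) ≤ η := by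
      have : 2 * K * η0 * CG = η := by
        rw [hη0def]
        field_simp
      nlinarith [hIG, hη0pos, hKpos]
    rw [abs_sub_comm]
    exact le_trans hfinal h2K
  -- conclude equality
  by_contra hne
  have hpos : 0 < |(∫ s in Set.Ioc x y, ⟪Uvec f i s, Fvec f s⟫ ^ 2)
      - (Ai f x i i - Ai f y i i)| := by
    rw [abs_pos, sub_ne_zero]
    exact hne
  have := habs _ (half_pos hpos)
  linarith [this, hpos]

theorem integrable_Ioi (i : Fin n) {ε : ℝ} (hε : 0 < ε) :
    IntegrableOn (fun s => ⟪Uvec f i s, Fvec f s⟫ ^ 2) (Set.Ioi ε) := by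
  refine integrableOn_Ioi_of_intervalIntegral_norm_bounded (Ai f ε i i) ε
    (b := fun k : ℕ => ε + k) (l := atTop)
    (fun k => phif_sq_integrableOn f hmeas hloc hU i hε)
    (tendsto_atTop_add_const_left _ ε tendsto_natCast_atTop_atTop) ?_
  refine Eventually.of_forall fun k => ?_
  have hle : ε ≤ ε + (k : ℝ) := by
    have : (0:ℝ) ≤ k := Nat.cast_nonneg k
    linarith
  rw [intervalIntegral.integral_of_le hle]
  have hnorm : (fun s => ‖⟪Uvec f i s, Fvec f s⟫ ^ 2‖)
      = fun s => ⟪Uvec f i s, Fvec f s⟫ ^ 2 := by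
    funext s; rw [Real.norm_eq_abs, abs_of_nonneg (sq_nonneg _)]
  rw [hnorm, main_eq f hmeas hloc hU i hε hle]
  have h0 : 0 ≤ Ai f (ε + k) i i :=
    Ai_diag_nonneg f hmeas hloc hU i (lt_of_lt_of_le hε hle)
  linarith

theorem not_integrable (i : Fin n) :
    ¬ IntegrableOn (fun s => ⟪Uvec f i s, Fvec f s⟫ ^ 2) (Set.Ioi 0) := by
  intro hInt
  set C1 : ℝ := Ai f 1 i i + ∫ s in Set.Ioi (0:ℝ), ⟪Uvec f i s, Fvec f s⟫ ^ 2 with hC1def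
  have hbound : ∀ t : ℝ, 0 < t → t ≤ 1 → Ai f t i i ≤ C1 := by
    intro t ht0 ht1
    have hkey := main_eq f hmeas hloc hU i ht0 ht1
    have hmono : (∫ s in Set.Ioc t 1, ⟪Uvec f i s, Fvec f s⟫ ^ 2)
        ≤ ∫ s in Set.Ioi (0:ℝ), ⟪Uvec f i s, Fvec f s⟫ ^ 2 := by
      refine setIntegral_mono_set hInt ?_ ?_
      · exact Eventually.of_forall fun s => sq_nonneg _
      · refine HasSubset.Subset.eventuallyLE fun s hs => ht0.trans_le hs.1.le
    rw [hC1def]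
    linarith
  set C : ℝ := max C1 0 + 1 with hCdef
  have hCpos : 0 < C := by positivity
  obtain ⟨t, ht0, ht1, htsmall⟩ := Mg_diag_small f hmeas hloc hU i
    (δ := 1 / C) (by positivity)
  have hlow := Ai_diag_lower f hmeas hloc hU i ht0 C
  have hsmall : C ^ 2 * Mg f t i i < C := by
    have h1 : C ^ 2 * Mg f t i i < C ^ 2 * (1 / C) := by
      refine mul_lt_mul_of_pos_left htsmall (by positivity)
    have h2 : C ^ 2 * (1 / C) = C := by field_simp [sq]
    calc C ^ 2 * Mg f t i i < C ^ 2 * (1 / C) := h1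
      _ = C := h2
  have hup := hbound t ht0 ht1
  have hC1C : C1 < C := by
    rw [hCdef]
    have := le_max_left C1 0
    linarith
  linarith

end hyp2

end main

end PhiAux

/-- For every index i, the component φ_i is not square-integrable at the origin:
∫_0^∞ φ_i(s)² ds = ∞, even though ∫_ε^∞ φ_i(s)² ds < ∞ for every ε > 0. -/
theorem phi_not_square_integrable_at_origin
    (n : ℕ) (hn : 1 ≤ n)
    (f : ℝ → Fin n → ℝ)
    (hf_meas : ∀ i, Measurable fun s => f s i)
    (hf_loc : ∀ i, ∀ t > (0 : ℝ), IntegrableOn (fun s => (f s i) ^ 2) (Set.Ioc 0 t))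
    (m : ℝ → Matrix (Fin n) (Fin n) ℝ)
    (hm : ∀ t, m t = Matrix.of fun i j => ∫ s in Set.Ioc 0 t, f s i * f s j)
    (hm_inv : ∀ t > (0 : ℝ), IsUnit (m t))
    (α : ℝ → Matrix (Fin n) (Fin n) ℝ)
    (hα : ∀ t, α t = (m t)⁻¹)
    (φ : ℝ → Fin n → ℝ)
    (hφ : ∀ t, φ t = (α t).mulVec (f t)) :
    ∀ i : Fin n,
      ¬ IntegrableOn (fun s => (φ s i) ^ 2) (Set.Ioi 0) ∧
      ∀ ε > (0 : ℝ), IntegrableOn (fun s => (φ s i) ^ 2) (Set.Ioi ε) := by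
  intro i
  have hmM : ∀ t, m t = PhiAux.Mg f t := fun t => hm t
  have hU : ∀ t > (0:ℝ), IsUnit (PhiAux.Mg f t) := fun t ht => by
    rw [← hmM t]; exact hm_inv t ht
  have hφeq : (fun s => (φ s i) ^ 2)
      = fun s => ⟪PhiAux.Uvec f i s, PhiAux.Fvec f s⟫ ^ 2 := by
    funext s
    rw [hφ, hα, hmM]
    rw [PhiAux.phi_eq f i s]
  constructor
  · rw [hφeq]
    exact PhiAux.not_integrable f hf_meas hf_loc hU i
  · intro ε hε
    rw [hφeq]
    exact PhiAux.integrable_Ioi f hf_meas hf_loc hU i hε
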